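/- Let p be a prime, P a finite p-group, and D a characteristic subgroup of P such that [D,P] ≤ Z(D) and such that every automorphism of P of order prime to p which fixes D pointwise is the identity. Let A be a maximal element, with respect to inclusion, of the set of abelian subgroups of D. Then A is normal in P, and the subgroup of Aut(P) consisting of all automorphisms of P which fix A pointwise is a p-group. -/

import Mathlib

/-- **Maximal abelian subgroups of a detecting subgroup.** If `D` is a characteristic
subgroup of a finite `p`-group `P` with `[D,P] ≤ Z(D)` detecting `p'`-automorphisms,
and `A` is a maximal abelian subgroup of `D`, then `A ⊴ P` and the automorphisms of `P`
fixing `A` pointwise form a `p`-group. -/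
theorem maximal_abelian_subgroup_normal_and_fixing_is_pGroup
    (p : ℕ) [Fact p.Prime]
    (P : Type) [Group P] [Finite P] (hP : IsPGroup p P)
    (D : Subgroup P) (hchar : D.Characteristic)
    (hcomm : ⁅D, (⊤ : Subgroup P)⁆ ≤ D ⊓ Subgroup.centralizer (D : Set P))
    (hdetect : ∀ φ : MulAut P, Nat.Coprime (orderOf φ) p → (∀ x ∈ D, φ x = x) → φ = 1)
    (A : Subgroup P) (hAD : A ≤ D) (hAab : ∀ x ∈ A, ∀ y ∈ A, x * y = y * x)
    (hAmax : ∀ B : Subgroup P, B ≤ D → (∀ x ∈ B, ∀ y ∈ B, x * y = y * x) →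
      A ≤ B → B = A) :
    A.Normal ∧ IsPGroup p (fixingSubgroup (MulAut P) (A : Set P)) := by
  -- Step 1: C_D(A) ≤ A
  have hCDA : ∀ x ∈ D, (∀ a ∈ A, x * a = a * x) → x ∈ A := by
    intro x hxD hxc
    set S : Set P := (A : Set P) ∪ {x} with hS
    have hcomm' : ∀ s ∈ S, ∀ t ∈ S, s * t = t * s := by
      rintro s (hs | rfl) t (ht | rfl)
      · exact hAab s hs t ht
      · exact (hxc s hs).symm
      · exact hxc t ht
      · rfl
    have h1 : Subgroup.closure S ≤ Subgroup.centralizer S := by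
      rw [Subgroup.closure_le]
      intro s hs
      rw [SetLike.mem_coe, Subgroup.mem_centralizer_iff]
      intro t ht
      exact hcomm' t ht s hs
    have h2' : Subgroup.closure S ≤ Subgroup.centralizer ((Subgroup.closure S : Subgroup P) : Set P) := by
      rw [Subgroup.closure_le]
      intro s hs
      rw [SetLike.mem_coe, Subgroup.mem_centralizer_iff]
      intro t ht
      exact (Subgroup.mem_centralizer_iff.mp (h1 ht) s hs).symm
    have h2 : ∀ b ∈ Subgroup.closure S, ∀ c ∈ Subgroup.closure S, b * c = c * b := by
      intro b hb c hc
      exact Subgroup.mem_centralizer_iff.mp (h2' hc) b hb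
    have hB : Subgroup.closure S = A := by
      apply hAmax
      · rw [Subgroup.closure_le]
        rintro s (hs | rfl)
        · exact hAD hs
        · exact hxD
      · exact h2
      · intro a ha
        exact Subgroup.subset_closure (Or.inl ha)
    rw [← hB]
    exact Subgroup.subset_closure (Or.inr rfl)
  -- elements of D ∩ centralizer D are in A
  have hcent : ∀ z, z ∈ D ⊓ Subgroup.centralizer (D : Set P) → z ∈ A := by
    intro z hz
    obtain ⟨hzD, hzC⟩ := hz
    apply hCDA z hzD
    intro a ha
    exact (Subgroup.mem_centralizer_iff.mp hzC a (hAD ha)).symm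
  -- Step 2: normality
  open scoped commutatorElement in
  have hnorm : A.Normal := by
    constructor
    intro a ha g
    have h1 : ⁅a, g⁆ ∈ ⁅D, (⊤ : Subgroup P)⁆ :=
      Subgroup.commutator_mem_commutator (hAD ha) (Subgroup.mem_top g)
    have h2 : ⁅a, g⁆ ∈ A := hcent _ (hcomm h1)
    have h3 : g * a * g⁻¹ = (⁅a, g⁆)⁻¹ * a := by
      rw [commutatorElement_def]
      group
    rw [h3]
    exact mul_mem (inv_mem h2) ha
  -- Step 3: key lemma: a p'-automorphism fixing A pointwise is trivial
  open scoped commutatorElement in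
  have key : ∀ φ : MulAut P, Nat.Coprime (orderOf φ) p → (∀ a ∈ A, φ a = a) → φ = 1 := by
    intro φ hcop hfix
    apply hdetect φ hcop
    intro x hxD
    have hφx : φ x ∈ D := by
      have h := hchar.fixed φ
      rw [← h] at hxD
      exact Subgroup.mem_comap.mp hxD
    set c := x⁻¹ * φ x with hc
    have hcD : c ∈ D := mul_mem (inv_mem hxD) hφx
    have h4 : φ x = x * c := by rw [hc]; group
    have hcA : c ∈ A := by
      apply hCDA c hcD
      intro a haA
      have hz : ⁅x, a⁆ ∈ A :=
        hcent _ (hcomm (Subgroup.commutator_mem_commutator hxD (Subgroup.mem_top a)))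
      have h1 : φ ⁅x, a⁆ = ⁅x, a⁆ := hfix _ hz
      have h2 : φ x * a * (φ x)⁻¹ * a⁻¹ = x * a * x⁻¹ * a⁻¹ := by
        simpa [commutatorElement_def, map_mul, map_inv, hfix a haA] using h1
      have h3 : φ x * a * (φ x)⁻¹ = x * a * x⁻¹ := mul_right_cancel h2
      rw [h4] at h3
      have h5 : x * (c * a * c⁻¹) * x⁻¹ = x * a * x⁻¹ := by
        rw [← h3]; group
      have h6 : c * a * c⁻¹ = a := mul_left_cancel (mul_right_cancel h5)
      exact mul_inv_eq_iff_eq_mul.mp h6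
    have hpow : ∀ k : ℕ, (φ ^ k) x = x * c ^ k := by
      intro k
      induction k with
      | zero => simp
      | succ k ih =>
        rw [pow_succ', MulAut.mul_apply, ih, map_mul, map_pow, hfix c hcA, h4,
          mul_assoc, ← pow_succ']
    have hc1 : c ^ orderOf φ = 1 := by
      have h := hpow (orderOf φ)
      rw [pow_orderOf_eq_one] at h
      simp only [MulAut.one_apply] at h
      exact (left_eq_mul.mp h)
    obtain ⟨j, hj⟩ := (IsPGroup.iff_orderOf.mp hP) c
    have hdvd : p ^ j ∣ orderOf φ := hj ▸ orderOf_dvd_of_pow_eq_one hc1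
    have hone : p ^ j = 1 := Nat.Coprime.eq_one_of_dvd ((hcop.pow_right j).symm) hdvd
    have : orderOf c = 1 := by rw [hj, hone]
    have hcone : c = 1 := orderOf_eq_one_iff.mp this
    rw [h4, hcone, mul_one]
  -- Step 4: the fixing subgroup is a p-group
  refine ⟨hnorm, ?_⟩
  haveI : Finite (MulAut P) :=
    Finite.of_injective (fun f : MulAut P => (f : P → P)) (fun f g h => by
      ext x; exact congrFun h x)
  rw [IsPGroup.iff_orderOf]
  rintro ⟨φ, hφ⟩
  set n := orderOf φ with hn
  have hn0 : n ≠ 0 := (orderOf_pos φ).ne'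
  set k := n.factorization p with hk
  have hfixpow : ∀ a ∈ A, (φ ^ p ^ k) a = a := by
    intro a ha
    have hmem : φ ^ p ^ k ∈ fixingSubgroup (MulAut P) (A : Set P) := pow_mem hφ _
    exact (mem_fixingSubgroup_iff (MulAut P)).mp hmem a ha
  have hord : orderOf (φ ^ p ^ k) = n / p ^ k := by
    rw [orderOf_pow, ← hn, Nat.gcd_eq_right (Nat.ordProj_dvd n p)]
  have hcop : Nat.Coprime (orderOf (φ ^ p ^ k)) p := by
    rw [hord]
    exact (Nat.coprime_ordCompl (Fact.out : p.Prime) hn0).symm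
  have hψ : φ ^ p ^ k = 1 := key _ hcop hfixpow
  have hdvd : orderOf φ ∣ p ^ k := orderOf_dvd_of_pow_eq_one hψ
  obtain ⟨i, _, hi⟩ := (Nat.dvd_prime_pow (Fact.out : p.Prime)).mp hdvd
  refine ⟨i, ?_⟩
  rw [← hi]
  exact (orderOf_injective (fixingSubgroup (MulAut P) (A : Set P)).subtype
    (Subgroup.subtype_injective _) ⟨φ, hφ⟩).symm
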